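/- Assume Hypothesis (H). Then for every k ≥ 2 and every positive integer i, the set of x ∈ (0,1) (with infinite ROE) whose k-th difference ROE digit equals i has Lebesgue measure at most l_k: λ({x : α_k(x) = i}) ≤ l_k. -/

import Mathlib

open MeasureTheory Set

namespace ROE

/-- The `x`-sequence of the restricted Oppenheim algorithm applied to `x`:
index `k` corresponds to the paper's `x_{k+1}`, and `a k`, `b k` correspond to the paper's
`a_{k+1}`, `b_{k+1}`.  So `X a b x 0 = x₁ = x` and
`x_{k+2} = (b_{k+1}(d_{k+1})/a_{k+1}(d_{k+1})) · (x_{k+1} - 1/d_{k+1})`. -/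
noncomputable def X (a b : ℕ → ℕ → ℕ) (x : ℝ) : ℕ → ℝ
  | 0 => x
  | k + 1 =>
      let xk := X a b x k
      let d : ℕ := (⌊1 / xk⌋).toNat + 1
      ((b k d : ℝ) / (a k d : ℝ)) * (xk - 1 / (d : ℝ))

/-- The digit `d_{k+1}(x) = ⌊1/x_{k+1}⌋ + 1` of the restricted Oppenheim expansion. -/
noncomputable def D (a b : ℕ → ℕ → ℕ) (x : ℝ) (k : ℕ) : ℕ :=
  (⌊1 / X a b x k⌋).toNat + 1

/-- The restricted Oppenheim expansion of `x` is infinite: all `x_n` lie in `(0,1)`. -/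
def InfiniteROE (a b : ℕ → ℕ → ℕ) (x : ℝ) : Prop :=
  ∀ k, X a b x k ∈ Set.Ioo (0 : ℝ) 1

/-- The finite sequence `(j 0, …, j (n-1))` (the paper's `(j_1, …, j_n)`) is admissible:
`j_1 ≥ 2` and `j_{i+1} > h_i(j_i)`.  Here `h i` corresponds to the paper's `h_{i+1}`. -/
def Admissible (h : ℕ → ℕ → ℕ) (n : ℕ) (j : ℕ → ℕ) : Prop :=
  2 ≤ j 0 ∧ ∀ i, i + 1 < n → h i (j i) < j (i + 1)

/-- The cylinder of rank `n` with base `(j 0, …, j (n-1))`: the set of `x ∈ (0,1)` with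
infinite ROE whose first `n` digits are `j 0, …, j (n-1)`. -/
def cylinder (a b : ℕ → ℕ → ℕ) (n : ℕ) (j : ℕ → ℕ) : Set ℝ :=
  {x | x ∈ Set.Ioo (0 : ℝ) 1 ∧ InfiniteROE a b x ∧ ∀ i < n, D a b x i = j i}

/-- The difference-ROE digit `α_{k+1}(x)`: `α₁ = d₁ - 1`, `α_{k+2} = d_{k+2} - h_{k+1}(d_{k+1})`. -/
noncomputable def alpha (a b h : ℕ → ℕ → ℕ) (x : ℝ) : ℕ → ℕ
  | 0 => D a b x 0 - 1
  | k + 1 => D a b x (k + 1) - h k (D a b x k)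

/-- The digit sequence `d` reconstructed from a sequence `α` of difference-ROE symbols:
`d₁ = α₁ + 1`, `d_{k+2} = h_{k+1}(d_{k+1}) + α_{k+2}`. -/
def dSeq (h : ℕ → ℕ → ℕ) (α : ℕ → ℕ) : ℕ → ℕ
  | 0 => α 0 + 1
  | k + 1 => h k (dSeq h α k) + α (k + 1)

/-- The real number whose difference-ROE digits are `(α k)`:
`Φ(α) = Σ_{n≥1} (∏_{i=1}^{n-1} a_i(d_i)/b_i(d_i)) · (1/d_n)`. -/
noncomputable def Phi (a b h : ℕ → ℕ → ℕ) (α : ℕ → ℕ) : ℝ :=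
  ∑' n : ℕ, (∏ i ∈ Finset.range n, (a i (dSeq h α i) : ℝ) / (b i (dSeq h α i) : ℝ)) *
    (1 / (dSeq h α n : ℝ))

lemma X_zero (a b : ℕ → ℕ → ℕ) (x : ℝ) : X a b x 0 = x := rfl

lemma X_succ (a b : ℕ → ℕ → ℕ) (x : ℝ) (k : ℕ) :
    X a b x (k + 1) = ((b k (D a b x k) : ℝ) / (a k (D a b x k) : ℝ)) *
      (X a b x k - 1 / (D a b x k : ℝ)) := rfl

lemma two_le_D (a b : ℕ → ℕ → ℕ) {x : ℝ} {n : ℕ}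
    (hx : X a b x n ∈ Set.Ioo (0 : ℝ) 1) : 2 ≤ D a b x n := by
  have h1 : (1 : ℝ) ≤ 1 / X a b x n := by
    rw [le_div_iff₀ hx.1]; linarith [hx.2]
  have h2 : (1 : ℤ) ≤ ⌊1 / X a b x n⌋ := Int.le_floor.mpr (by exact_mod_cast h1)
  unfold D; omega

lemma D_bounds (a b : ℕ → ℕ → ℕ) {x : ℝ} {n : ℕ}
    (hx : X a b x n ∈ Set.Ioo (0 : ℝ) 1) :
    1 / (D a b x n : ℝ) < X a b x n ∧ X a b x n ≤ 1 / ((D a b x n : ℝ) - 1) := by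
  have h1 : (1 : ℝ) ≤ 1 / X a b x n := by
    rw [le_div_iff₀ hx.1]; linarith [hx.2]
  have h2 : (1 : ℤ) ≤ ⌊1 / X a b x n⌋ := Int.le_floor.mpr (by exact_mod_cast h1)
  have hDcast : (D a b x n : ℝ) = (⌊1 / X a b x n⌋ : ℝ) + 1 := by
    have h3 : (D a b x n : ℤ) = ⌊1 / X a b x n⌋ + 1 := by unfold D; push_cast; omega
    exact_mod_cast h3
  have hfl : (⌊1 / X a b x n⌋ : ℝ) ≤ 1 / X a b x n := Int.floor_le _
  have hfu : 1 / X a b x n < (⌊1 / X a b x n⌋ : ℝ) + 1 := Int.lt_floor_add_one _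
  constructor
  · rw [div_lt_iff₀ (by rw [hDcast]; push_cast; linarith : (0:ℝ) < (D a b x n : ℝ))]
    rw [hDcast]
    have := (div_lt_iff₀ hx.1).mp hfu
    linarith [this]
  · have hd1 : (1:ℝ) ≤ (⌊1 / X a b x n⌋ : ℝ) := by exact_mod_cast h2
    rw [le_div_iff₀ (by rw [hDcast]; linarith : (0:ℝ) < (D a b x n : ℝ) - 1)]
    rw [hDcast]
    have := (le_div_iff₀ hx.1).mp hfl
    linarith [this]

lemma D_eq_of_mem (a b : ℕ → ℕ → ℕ) {x : ℝ} {n J : ℕ} (hJ : 2 ≤ J)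
    (hmem : X a b x n ∈ Set.Ioo (1 / (J : ℝ)) (1 / ((J : ℝ) - 1))) :
    D a b x n = J := by
  have hJ0 : (0:ℝ) < (J:ℝ) := by positivity
  have hJ1 : (0:ℝ) < (J:ℝ) - 1 := by
    have : (2:ℝ) ≤ (J:ℝ) := by exact_mod_cast hJ
    linarith
  have hxpos : 0 < X a b x n := lt_trans (by positivity) hmem.1
  have hu : 1 / X a b x n < (J : ℝ) := by
    rw [div_lt_iff₀ hxpos]
    have := (div_lt_iff₀ hJ0).mp hmem.1
    linarith
  have hl : (J : ℝ) - 1 < 1 / X a b x n := by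
    rw [lt_div_iff₀ hxpos]
    have := (lt_div_iff₀ hJ1).mp hmem.2
    linarith
  have hfl : ⌊1 / X a b x n⌋ = (J : ℤ) - 1 := by
    rw [Int.floor_eq_iff]
    constructor
    · push_cast; linarith
    · push_cast; linarith
  unfold D
  omega


section Affine

variable (a b h : ℕ → ℕ → ℕ) (J : ℕ → ℕ)

/-- Auxiliary: the slope of the affine map `x ↦ x_{t+1}` on a cylinder with digits `J`. -/
noncomputable def Cp (t : ℕ) : ℝ := ∏ n ∈ Finset.range t, (b n (J n) : ℝ) / (a n (J n) : ℝ)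

/-- Auxiliary: the offset of the affine map `x ↦ x_{t+1}` on a cylinder with digits `J`. -/
noncomputable def Ep (t : ℕ) : ℝ :=
  ∑ n ∈ Finset.range t, (Cp a b J n)⁻¹ * ((J n : ℝ))⁻¹

variable (hA : ∀ n, 0 < a n (J n)) (hB : ∀ n, 0 < b n (J n)) (hJ2 : ∀ n, 2 ≤ J n)

include hA hB

lemma Cp_pos (t : ℕ) : 0 < Cp a b J t := by
  apply Finset.prod_pos
  intro n _
  have h1 : (0:ℝ) < a n (J n) := by exact_mod_cast hA n
  have h2 : (0:ℝ) < b n (J n) := by exact_mod_cast hB n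
  positivity

include hJ2

lemma X_affine : ∀ (t : ℕ) (x : ℝ), (∀ n, n < t → D a b x n = J n) →
    X a b x t = Cp a b J t * (x - Ep a b J t) := by
  intro t
  induction t with
  | zero => intro x _; simp [Cp, Ep, X_zero]
  | succ t ih =>
    intro x hx
    have hd : D a b x t = J t := hx t (Nat.lt_succ_self t)
    have hXt := ih x (fun n hn => hx n (by omega))
    rw [X_succ, hd, hXt]
    have hCpos := Cp_pos a b J hA hB t
    have hA' : ((a t (J t) : ℝ)) ≠ 0 := by
      have h1 : (0:ℝ) < a t (J t) := by exact_mod_cast hA t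
      exact h1.ne'
    have hJ' : ((J t : ℝ)) ≠ 0 := by
      have h1 : (0:ℝ) < J t := by
        have := hJ2 t; exact_mod_cast by omega
      exact h1.ne'
    rw [show Cp a b J (t+1) = Cp a b J t * ((b t (J t) : ℝ) / (a t (J t) : ℝ)) from
      Finset.prod_range_succ _ t,
      show Ep a b J (t+1) = Ep a b J t + (Cp a b J t)⁻¹ * ((J t : ℝ))⁻¹ from
      Finset.sum_range_succ _ t]
    field_simp
    ring

/-- Single step of the affine recursion as an identity of affine expressions. -/
lemma affine_step (t : ℕ) (x : ℝ) :
    Cp a b J (t+1) * (x - Ep a b J (t+1)) =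
      ((b t (J t) : ℝ) / (a t (J t) : ℝ)) *
        (Cp a b J t * (x - Ep a b J t) - 1 / (J t : ℝ)) := by
  have hCpos := Cp_pos a b J hA hB t
  have hA' : ((a t (J t) : ℝ)) ≠ 0 := by
    have h1 : (0:ℝ) < a t (J t) := by exact_mod_cast hA t
    exact h1.ne'
  have hJ' : ((J t : ℝ)) ≠ 0 := by
    have h1 : (0:ℝ) < J t := by
      have := hJ2 t; exact_mod_cast by omega
    exact h1.ne'
  rw [show Cp a b J (t+1) = Cp a b J t * ((b t (J t) : ℝ) / (a t (J t) : ℝ)) from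
    Finset.prod_range_succ _ t,
    show Ep a b J (t+1) = Ep a b J t + (Cp a b J t)⁻¹ * ((J t : ℝ))⁻¹ from
    Finset.sum_range_succ _ t]
  field_simp
  ring

variable (hH : ∀ n, 0 < h n (J n)) (hadm : ∀ n, h n (J n) < J (n+1))
  (habJ : ∀ n, b n (J n) * h n (J n) = a n (J n) * J n * (J n - 1))

include hH hadm habJ

lemma step_down (t : ℕ) (x : ℝ)
    (hmem : Cp a b J (t+1) * (x - Ep a b J (t+1)) ∈
      Set.Ioo (1 / (J (t+1) : ℝ)) (1 / ((J (t+1) : ℝ) - 1))) :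
    Cp a b J t * (x - Ep a b J t) ∈ Set.Ioo (1 / (J t : ℝ)) (1 / ((J t : ℝ) - 1)) := by
  have hstep := affine_step a b J hA hB hJ2 t x
  have hApos : (0:ℝ) < (a t (J t) : ℝ) := by exact_mod_cast hA t
  have hBpos : (0:ℝ) < (b t (J t) : ℝ) := by exact_mod_cast hB t
  have hHpos : (0:ℝ) < (h t (J t) : ℝ) := by exact_mod_cast hH t
  have hj2 : (2:ℝ) ≤ (J t : ℝ) := by exact_mod_cast hJ2 t
  have hcast : (b t (J t) : ℝ) * (h t (J t) : ℝ) =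
      (a t (J t) : ℝ) * (J t : ℝ) * ((J t : ℝ) - 1) := by
    have h0 := habJ t
    have h2 := hJ2 t
    have h1 : ((b t (J t) * h t (J t) : ℕ) : ℝ) = ((a t (J t) * J t * (J t - 1) : ℕ) : ℝ) := by
      exact_mod_cast congrArg (Nat.cast : ℕ → ℝ) h0
    push_cast [Nat.cast_sub (by omega : 1 ≤ J t)] at h1
    linarith [h1]
  have hadm' : ((h t (J t) : ℝ)) + 1 ≤ (J (t+1) : ℝ) := by exact_mod_cast hadm t
  set y := Cp a b J t * (x - Ep a b J t) with hy
  set Ac : ℝ := (a t (J t) : ℝ) with hAc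
  set Bc : ℝ := (b t (J t) : ℝ) with hBc
  set Hc : ℝ := (h t (J t) : ℝ) with hHc
  set jc : ℝ := (J t : ℝ) with hjc
  have hBA : (0:ℝ) < Bc / Ac := div_pos hBpos hApos
  -- lower bound
  have hlow : 1 / jc < y := by
    have h0 : (0:ℝ) < 1 / (J (t+1) : ℝ) := by
      have hq : (0:ℝ) < (J (t+1) : ℝ) := by linarith
      positivity
    have hprod : 0 < (Bc / Ac) * (y - 1 / jc) := by
      rw [← hstep]; exact lt_trans h0 hmem.1
    nlinarith [hprod, hBA]
  -- upper bound
  have hJt1pos : (0:ℝ) < (J (t+1) : ℝ) - 1 := by linarith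
  have hup1 : (Bc / Ac) * (y - 1 / jc) < 1 / Hc := by
    have h1 : (Bc / Ac) * (y - 1 / jc) < 1 / ((J (t+1) : ℝ) - 1) := by
      rw [← hstep]; exact hmem.2
    have h2 : 1 / ((J (t+1) : ℝ) - 1) ≤ 1 / Hc :=
      one_div_le_one_div_of_le hHpos (by linarith)
    linarith
  have hup2 : y - 1 / jc < (1 / Hc) / (Bc / Ac) := by
    rw [lt_div_iff₀ hBA]; linarith [hup1]
  have h4 : jc ≠ 0 := by intro hq; rw [hq] at hj2; linarith
  have h5 : jc - 1 ≠ 0 := by intro hq; nlinarith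
  have hkey : (1 / Hc) / (Bc / Ac) = 1 / (jc * (jc - 1)) := by
    field_simp
    linear_combination -hcast
  have hident : 1 / jc + 1 / (jc * (jc - 1)) = 1 / (jc - 1) := by
    field_simp
    ring
  exact ⟨hlow, by rw [hkey] at hup2; linarith⟩

/-- Downward chain: membership at level `t` implies membership at all lower levels. -/
lemma mem_down : ∀ (t : ℕ) (x : ℝ),
    Cp a b J t * (x - Ep a b J t) ∈ Set.Ioo (1 / (J t : ℝ)) (1 / ((J t : ℝ) - 1)) →
    ∀ u ≤ t, Cp a b J u * (x - Ep a b J u) ∈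
      Set.Ioo (1 / (J u : ℝ)) (1 / ((J u : ℝ) - 1)) := by
  intro t
  induction t with
  | zero =>
    intro x hmem u hu
    obtain rfl : u = 0 := by omega
    exact hmem
  | succ t ih =>
    intro x hmem u hu
    rcases Nat.lt_or_ge u (t+1) with h1 | h1
    · exact ih x (step_down a b h J hA hB hJ2 hH hadm habJ t x hmem) u (by omega)
    · obtain rfl : u = t + 1 := by omega
      exact hmem

omit hH hadm habJ in
/-- If the affine expressions are in the digit intervals at every level up to `t`,
then the digits of `x` agree with `J` up to `t`. -/
lemma D_eq_all (t : ℕ) (x : ℝ)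
    (hmem : ∀ u ≤ t, Cp a b J u * (x - Ep a b J u) ∈
      Set.Ioo (1 / (J u : ℝ)) (1 / ((J u : ℝ) - 1))) :
    ∀ u ≤ t, D a b x u = J u := by
  intro u
  induction u using Nat.strong_induction_on with
  | _ u ih =>
    intro hu
    have hX : X a b x u = Cp a b J u * (x - Ep a b J u) :=
      X_affine a b J hA hB hJ2 u x (fun n hn => ih n hn (by omega))
    exact D_eq_of_mem a b (hJ2 u) (hX ▸ hmem u hu)

end Affine


/-- For `x` with infinite ROE, successive digits satisfy the admissibility condition. -/
lemma D_succ_gt (a b h : ℕ → ℕ → ℕ)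
    (ha : ∀ k j, 2 ≤ j → 0 < a k j) (hb : ∀ k j, 2 ≤ j → 0 < b k j)
    (hpos : ∀ k j, 2 ≤ j → 0 < h k j)
    (hab : ∀ k j, 2 ≤ j → b k j * h k j = a k j * j * (j - 1))
    {x : ℝ} (hinf : InfiniteROE a b x) (n : ℕ) :
    h n (D a b x n) < D a b x (n + 1) := by
  have hx := hinf n
  have hx' := hinf (n + 1)
  have hd2 : 2 ≤ D a b x n := two_le_D a b hx
  have hb1 := D_bounds a b hx
  set d := D a b x n with hd
  have hApos : (0:ℝ) < (a n d : ℝ) := by exact_mod_cast ha n d hd2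
  have hBpos : (0:ℝ) < (b n d : ℝ) := by exact_mod_cast hb n d hd2
  have hHpos : (0:ℝ) < (h n d : ℝ) := by exact_mod_cast hpos n d hd2
  have hdr2 : (2:ℝ) ≤ (d : ℝ) := by exact_mod_cast hd2
  have hcast : (b n d : ℝ) * (h n d : ℝ) = (a n d : ℝ) * (d : ℝ) * ((d : ℝ) - 1) := by
    have h0 := hab n d hd2
    have h1 : ((b n d * h n d : ℕ) : ℝ) = ((a n d * d * (d - 1) : ℕ) : ℝ) := by
      exact_mod_cast congrArg (Nat.cast : ℕ → ℝ) h0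
    push_cast [Nat.cast_sub (by omega : 1 ≤ d)] at h1
    linarith [h1]
  have hd0 : (d : ℝ) ≠ 0 := by linarith
  have hd1 : (d : ℝ) - 1 ≠ 0 := by intro hq; linarith
  have hXle : X a b x (n + 1) ≤ 1 / (h n d : ℝ) := by
    rw [X_succ, ← hd]
    have h1 : X a b x n - 1 / (d:ℝ) ≤ 1 / ((d:ℝ) - 1) - 1 / (d:ℝ) := by linarith [hb1.2]
    have h2 : 1 / ((d:ℝ) - 1) - 1 / (d:ℝ) = 1 / ((d:ℝ) * ((d:ℝ) - 1)) := by
      field_simp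
      ring
    have h3 : ((b n d : ℝ) / (a n d : ℝ)) * (1 / ((d:ℝ) * ((d:ℝ) - 1))) = 1 / (h n d : ℝ) := by
      field_simp
      linear_combination hcast
    calc ((b n d : ℝ) / (a n d : ℝ)) * (X a b x n - 1 / (d:ℝ))
        ≤ ((b n d : ℝ) / (a n d : ℝ)) * (1 / ((d:ℝ) * ((d:ℝ) - 1))) := by
          apply mul_le_mul_of_nonneg_left _ (le_of_lt (div_pos hBpos hApos))
          linarith [h1, h2]
      _ = 1 / (h n d : ℝ) := h3
  have hfl : ((h n d : ℕ) : ℤ) ≤ ⌊1 / X a b x (n + 1)⌋ := by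
    apply Int.le_floor.mpr
    push_cast
    rw [le_div_iff₀ hx'.1]
    have hmul := mul_le_mul_of_nonneg_left hXle hHpos.le
    rw [mul_one_div, div_self hHpos.ne'] at hmul
    linarith
  have hDd : D a b x (n + 1) = (⌊1 / X a b x (n + 1)⌋).toNat + 1 := rfl
  omega

/-- `X` is a measurable function of `x`. -/
lemma measurable_X (a b : ℕ → ℕ → ℕ) (k : ℕ) : Measurable fun x : ℝ => X a b x k := by
  induction k with
  | zero => exact measurable_id
  | succ k ih =>
    have hD : Measurable fun x : ℝ => D a b x k := by
      have h1 : Measurable fun x : ℝ => ⌊1 / X a b x k⌋ := (measurable_const.div ih).floor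
      exact (measurable_from_top (f := fun z : ℤ => z.toNat + 1)).comp h1
    have e : (fun x : ℝ => X a b x (k + 1)) = fun x : ℝ =>
        ((b k (D a b x k) : ℝ) / (a k (D a b x k) : ℝ)) *
          (X a b x k - 1 / (D a b x k : ℝ)) := funext fun x => X_succ a b x k
    rw [e]
    have c1 : Measurable fun x : ℝ => (b k (D a b x k) : ℝ) :=
      (measurable_from_top (f := fun n : ℕ => (b k n : ℝ))).comp hD
    have c2 : Measurable fun x : ℝ => (a k (D a b x k) : ℝ) :=
      (measurable_from_top (f := fun n : ℕ => (a k n : ℝ))).comp hD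
    have c3 : Measurable fun x : ℝ => (D a b x k : ℝ) :=
      (measurable_from_top (f := fun n : ℕ => (n : ℝ))).comp hD
    exact (c1.div c2).mul (ih.sub (measurable_const.div c3))

lemma measurable_D (a b : ℕ → ℕ → ℕ) (k : ℕ) : Measurable fun x : ℝ => D a b x k := by
  have h1 : Measurable fun x : ℝ => ⌊1 / X a b x k⌋ :=
    (measurable_const.div (measurable_X a b k)).floor
  exact (measurable_from_top (f := fun z : ℤ => z.toNat + 1)).comp h1

set_option maxHeartbeats 1000000 in
/-- Assume Hypothesis (H): there is a sequence `(l_k)_{k≥2}` of positive reals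
with `Σ_{k≥2} l_k < ∞` (below indexed by `m = k - 2`) such that for every `x` with infinite ROE
and every `k ≥ 2`,
`b_{k-1}(d_{k-1}(x)) / (a_{k-1}(d_{k-1}(x)) · d_{k-1}(x) · (d_{k-1}(x) - 1)) < l_k`.
Then for every `k ≥ 2` and every positive integer `i`, the set of `x ∈ (0,1)` with infinite ROE
whose `k`-th difference-ROE digit equals `i` has `λ({x : α_k(x) = i}) ≤ l_k`. -/
theorem measure_alpha_eq_le (a b h : ℕ → ℕ → ℕ)
    (ha : ∀ k j, 2 ≤ j → 0 < a k j) (hb : ∀ k j, 2 ≤ j → 0 < b k j)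
    (hpos : ∀ k j, 2 ≤ j → 0 < h k j)
    (hab : ∀ k j, 2 ≤ j → b k j * h k j = a k j * j * (j - 1))
    (l : ℕ → ℝ) (hlpos : ∀ k, 2 ≤ k → 0 < l k)
    (hlsum : Summable fun m : ℕ => l (m + 2))
    (hH : ∀ x : ℝ, InfiniteROE a b x → ∀ m : ℕ,
      (b m (D a b x m) : ℝ) /
          ((a m (D a b x m) : ℝ) * (D a b x m : ℝ) * ((D a b x m : ℝ) - 1)) < l (m + 2))
    (k : ℕ) (hk : 2 ≤ k) (i : ℕ) (hi : 1 ≤ i) :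
    volume {x : ℝ | x ∈ Set.Ioo (0 : ℝ) 1 ∧ InfiniteROE a b x ∧ alpha a b h x (k - 1) = i} ≤
      ENNReal.ofReal (l k) := by
  obtain ⟨m, rfl⟩ : ∃ m, k = m + 2 := ⟨k - 2, by omega⟩
  have hL : 0 < l (m + 2) := hlpos (m + 2) (by omega)
  -- the partition sets according to the first m+1 digits
  set V : (Fin (m + 1) → ℕ) → Set ℝ := fun j =>
    Set.Ioo (0:ℝ) 1 ∩ ⋂ t : Fin (m + 1), {x : ℝ | D a b x (t : ℕ) = j t} with hVdef
  set S : Set ℝ :=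
    {x : ℝ | x ∈ Set.Ioo (0 : ℝ) 1 ∧ InfiniteROE a b x ∧ alpha a b h x (m + 2 - 1) = i}
    with hSdef
  have hVmeas : ∀ j, MeasurableSet (V j) := by
    intro j
    apply measurableSet_Ioo.inter
    apply MeasurableSet.iInter
    intro t
    exact (measurable_D a b (t : ℕ)) (measurableSet_singleton (j t))
  have hVdisj : Pairwise (Function.onFun Disjoint V) := by
    intro j j' hjj'
    rw [Function.onFun, Set.disjoint_left]
    intro x hx hx'
    apply hjj'
    funext t
    have h1 : D a b x (t : ℕ) = j t := Set.mem_iInter.mp hx.2 t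
    have h2 : D a b x (t : ℕ) = j' t := Set.mem_iInter.mp hx'.2 t
    rw [← h1, h2]
  have hVsub : ∀ j, V j ⊆ Set.Ioo (0:ℝ) 1 := fun j => Set.inter_subset_left
  have hcover : S ⊆ ⋃ j, S ∩ V j := by
    intro x hx
    refine Set.mem_iUnion.mpr ⟨fun t => D a b x (t : ℕ), hx, hx.1, ?_⟩
    exact Set.mem_iInter.mpr fun t => rfl
  -- key estimate on each piece
  have key : ∀ j, volume (S ∩ V j) ≤ ENNReal.ofReal (l (m + 2)) * volume (V j) := by
    intro j
    rcases Set.eq_empty_or_nonempty (S ∩ V j) with hE | ⟨x₀, hx₀S, hx₀V⟩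
    · rw [hE]; simp
    obtain ⟨hx₀io, hx₀inf, hx₀al⟩ := hx₀S
    set J : ℕ → ℕ := D a b x₀ with hJdef
    have hJ2 : ∀ n, 2 ≤ J n := fun n => two_le_D a b (hx₀inf n)
    have hA : ∀ n, 0 < a n (J n) := fun n => ha n (J n) (hJ2 n)
    have hB : ∀ n, 0 < b n (J n) := fun n => hb n (J n) (hJ2 n)
    have hHn : ∀ n, 0 < h n (J n) := fun n => hpos n (J n) (hJ2 n)
    have hadmJ : ∀ n, h n (J n) < J (n + 1) := fun n =>
      D_succ_gt a b h ha hb hpos hab hx₀inf n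
    have habJ : ∀ n, b n (J n) * h n (J n) = a n (J n) * J n * (J n - 1) := fun n =>
      hab n (J n) (hJ2 n)
    have hx₀V' : ∀ t : Fin (m + 1), J (t : ℕ) = j t := fun t => Set.mem_iInter.mp hx₀V.2 t
    have hal₀ : J (m + 1) - h m (J m) = i := hx₀al
    have hs : J (m + 1) = h m (J m) + i := by
      have hgt := hadmJ m
      omega
    -- constants
    have hC0pos : 0 < Cp a b J m := Cp_pos a b J hA hB m
    have hC1pos : 0 < Cp a b J (m + 1) := Cp_pos a b J hA hB (m + 1)
    set C0 : ℝ := Cp a b J m with hC0def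
    set C1 : ℝ := Cp a b J (m + 1) with hC1def
    set E0 : ℝ := Ep a b J m with hE0def
    set E1 : ℝ := Ep a b J (m + 1) with hE1def
    set sr : ℝ := (J (m + 1) : ℝ) with hsrdef
    set jm : ℝ := (J m : ℝ) with hjmdef
    have hsr2 : (2:ℝ) ≤ sr := by rw [hsrdef]; exact_mod_cast hJ2 (m + 1)
    have hjm2 : (2:ℝ) ≤ jm := by rw [hjmdef]; exact_mod_cast hJ2 m
    -- upper inclusion
    have hsubU : S ∩ V j ⊆
        Set.Ioc (E1 + (1 / sr) / C1) (E1 + (1 / (sr - 1)) / C1) := by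
      rintro x ⟨⟨hxio, hxinf, hxal⟩, hxV⟩
      have hdig : ∀ n, n < m + 1 → D a b x n = J n := by
        intro n hn
        have h1 : D a b x n = j ⟨n, hn⟩ := Set.mem_iInter.mp hxV.2 ⟨n, hn⟩
        have h2 : J n = j ⟨n, hn⟩ := hx₀V' ⟨n, hn⟩
        exact h1.trans h2.symm
      have hX1 : X a b x (m + 1) = C1 * (x - E1) :=
        X_affine a b J hA hB hJ2 (m + 1) x hdig
      have hd1 : D a b x (m + 1) = J (m + 1) := by
        have h1 : D a b x (m + 1) - h m (D a b x m) = i := hxal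
        have h2 : D a b x m = J m := hdig m (Nat.lt_succ_self m)
        rw [h2] at h1
        omega
      have hbd := D_bounds a b (hxinf (m + 1))
      rw [hd1, hX1] at hbd
      constructor
      · have h3 := (div_lt_iff₀ hC1pos).mpr
          (by rw [mul_comm]; exact hbd.1 : (1:ℝ) / sr < (x - E1) * C1)
        linarith
      · have h3 := (le_div_iff₀ hC1pos).mpr
          (by rw [mul_comm]; exact hbd.2 : (x - E1) * C1 ≤ 1 / (sr - 1))
        linarith
    -- lower inclusion
    have hsubL : Set.Ioo (E0 + (1 / jm) / C0) (E0 + (1 / (jm - 1)) / C0) ⊆ V j := by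
      intro x hx
      have hmem_m : C0 * (x - E0) ∈ Set.Ioo (1 / jm) (1 / (jm - 1)) := by
        constructor
        · have h3 := (div_lt_iff₀ hC0pos).mp (by linarith [hx.1] : (1:ℝ) / jm / C0 < x - E0)
          linarith
        · have h3 := (lt_div_iff₀ hC0pos).mp (by linarith [hx.2] : x - E0 < 1 / (jm - 1) / C0)
          linarith
      have hall := mem_down a b h J hA hB hJ2 hHn hadmJ habJ m x hmem_m
      have hdig := D_eq_all a b J hA hB hJ2 m x hall
      have hx01 : x ∈ Set.Ioo (0:ℝ) 1 := by
        have h0 := hall 0 (Nat.zero_le m)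
        have hc0 : Cp a b J 0 = 1 := by simp [Cp]
        have he0 : Ep a b J 0 = 0 := by simp [Ep]
        rw [hc0, he0] at h0
        have hJ0 : (2:ℝ) ≤ (J 0 : ℝ) := by exact_mod_cast hJ2 0
        have h01 : (0:ℝ) < 1 / (J 0 : ℝ) := by positivity
        have h02 : 1 / ((J 0 : ℝ) - 1) ≤ 1 := by
          rw [div_le_one (by linarith)]
          linarith
        constructor
        · have := h0.1; linarith
        · have := h0.2; linarith
      refine ⟨hx01, Set.mem_iInter.mpr fun t => ?_⟩
      have h1 : D a b x (t : ℕ) = J (t : ℕ) := hdig (t : ℕ) (by omega)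
      show D a b x (t : ℕ) = j t
      exact h1.trans (hx₀V' t)
    -- arithmetic
    have hApos : (0:ℝ) < (a m (J m) : ℝ) := by exact_mod_cast hA m
    have hBpos : (0:ℝ) < (b m (J m) : ℝ) := by exact_mod_cast hB m
    have hHpos : (0:ℝ) < (h m (J m) : ℝ) := by exact_mod_cast hHn m
    have hir : (1:ℝ) ≤ (i : ℝ) := by exact_mod_cast hi
    have hsrH : sr = (h m (J m) : ℝ) + (i : ℝ) := by
      rw [hsrdef, hs]; push_cast; ring
    have hcast : (b m (J m) : ℝ) * (h m (J m) : ℝ) =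
        (a m (J m) : ℝ) * jm * (jm - 1) := by
      have h0 := habJ m
      have h1 : ((b m (J m) * h m (J m) : ℕ) : ℝ) = ((a m (J m) * J m * (J m - 1) : ℕ) : ℝ) :=
        by exact_mod_cast congrArg (Nat.cast : ℕ → ℝ) h0
      push_cast [Nat.cast_sub (by have := hJ2 m; omega : 1 ≤ J m)] at h1
      rw [hjmdef]
      linarith [h1]
    have hLH : 1 < l (m + 2) * (h m (J m) : ℝ) := by
      have h0 := hH x₀ hx₀inf m
      have hD0 : D a b x₀ m = J m := by rw [hJdef]
      rw [hD0, ← hjmdef] at h0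
      have hden : (a m (J m) : ℝ) * jm * (jm - 1) =
          (b m (J m) : ℝ) * (h m (J m) : ℝ) := hcast.symm
      rw [hden] at h0
      have h1 : (b m (J m) : ℝ) / ((b m (J m) : ℝ) * (h m (J m) : ℝ)) =
          1 / (h m (J m) : ℝ) := by
        field_simp
      rw [h1] at h0
      have := (div_lt_iff₀ hHpos).mp h0
      linarith
    have hC1eq : C1 = C0 * ((b m (J m) : ℝ) / (a m (J m) : ℝ)) := by
      rw [hC1def, hC0def]
      exact Finset.prod_range_succ _ m
    have hsr1 : (0:ℝ) < sr - 1 := by linarith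
    have hjm1 : (0:ℝ) < jm - 1 := by linarith
    have step1 : (h m (J m) : ℝ) ≤ l (m + 2) * (sr * (sr - 1)) := by
      have hss : (h m (J m) : ℝ) * ((h m (J m) : ℝ) + 1) ≤ sr * (sr - 1) := by
        nlinarith [hHpos, hir, hsrH]
      have h2 := mul_le_mul_of_nonneg_left hss hL.le
      linarith [mul_pos (sub_pos.mpr hLH)
        (show (0:ℝ) < (h m (J m) : ℝ) + 1 by linarith), h2]
    have core : (a m (J m) : ℝ) * (jm * (jm - 1)) ≤
        l (m + 2) * ((b m (J m) : ℝ) * (sr * (sr - 1))) := by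
      have h1 := mul_le_mul_of_nonneg_left step1 hBpos.le
      linarith [h1, hcast]
    have realineq : (E1 + (1 / (sr - 1)) / C1) - (E1 + (1 / sr) / C1) ≤
        l (m + 2) * ((E0 + (1 / (jm - 1)) / C0) - (E0 + (1 / jm) / C0)) := by
      have e1 : (E1 + (1 / (sr - 1)) / C1) - (E1 + (1 / sr) / C1) =
          (1 / C0) * (((a m (J m) : ℝ) / (b m (J m) : ℝ)) * (1 / (sr * (sr - 1)))) := by
        rw [hC1eq]
        field_simp
        ring
      have e0 : (E0 + (1 / (jm - 1)) / C0) - (E0 + (1 / jm) / C0) =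
          (1 / C0) * (1 / (jm * (jm - 1))) := by
        field_simp
        ring
      rw [e1, e0, mul_left_comm (l (m + 2)) (1 / C0)]
      apply mul_le_mul_of_nonneg_left _ (by positivity : (0:ℝ) ≤ 1 / C0)
      rw [div_mul_div_comm, mul_one, mul_one_div,
        div_le_div_iff₀ (by positivity) (by positivity)]
      nlinarith [core]
    -- conclude
    calc volume (S ∩ V j)
        ≤ volume (Set.Ioc (E1 + (1 / sr) / C1) (E1 + (1 / (sr - 1)) / C1)) :=
          measure_mono hsubU
      _ = ENNReal.ofReal ((E1 + (1 / (sr - 1)) / C1) - (E1 + (1 / sr) / C1)) :=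
          Real.volume_Ioc
      _ ≤ ENNReal.ofReal (l (m + 2) *
            ((E0 + (1 / (jm - 1)) / C0) - (E0 + (1 / jm) / C0))) :=
          ENNReal.ofReal_le_ofReal realineq
      _ = ENNReal.ofReal (l (m + 2)) *
            ENNReal.ofReal ((E0 + (1 / (jm - 1)) / C0) - (E0 + (1 / jm) / C0)) :=
          ENNReal.ofReal_mul hL.le
      _ = ENNReal.ofReal (l (m + 2)) *
            volume (Set.Ioo (E0 + (1 / jm) / C0) (E0 + (1 / (jm - 1)) / C0)) := by
          rw [Real.volume_Ioo]
      _ ≤ ENNReal.ofReal (l (m + 2)) * volume (V j) :=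
          mul_le_mul_right (measure_mono hsubL) _
  -- sum up
  calc volume S ≤ volume (⋃ j, S ∩ V j) := measure_mono hcover
    _ ≤ ∑' j, volume (S ∩ V j) := measure_iUnion_le _
    _ ≤ ∑' j, ENNReal.ofReal (l (m + 2)) * volume (V j) := ENNReal.tsum_le_tsum key
    _ = ENNReal.ofReal (l (m + 2)) * ∑' j, volume (V j) := ENNReal.tsum_mul_left
    _ = ENNReal.ofReal (l (m + 2)) * volume (⋃ j, V j) := by
        rw [measure_iUnion hVdisj hVmeas]
    _ ≤ ENNReal.ofReal (l (m + 2)) * volume (Set.Ioo (0:ℝ) 1) :=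
        mul_le_mul_right (measure_mono (Set.iUnion_subset hVsub)) _
    _ = ENNReal.ofReal (l (m + 2)) := by
        rw [Real.volume_Ioo]
        norm_num


end ROE
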